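/- For any bitstring x of length 2n−1 with exactly n−1 ones (n ≥ 1), there is a unique integer ℓ with 0 ≤ ℓ ≤ 2n−2 such that the first 2n−2 bits of the cyclic left rotation of x by ℓ steps form a Dyck word. -/

import Mathlib

/-- A Dyck word (as a list of `Bool`, `true` = 1, `false` = 0). -/
def IsDyck (w : List Bool) : Prop :=
  (∀ i : ℕ, (w.take i).count false ≤ (w.take i).count true) ∧
    w.count false = w.count true

private def psum (v : ℕ → ℤ) (m : ℕ) : ℤ := ∑ j ∈ Finset.range m, v j

private lemma psum_succ (v : ℕ → ℤ) (m : ℕ) : psum v (m + 1) = psum v m + v m :=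
  Finset.sum_range_succ v m

private lemma psum_period (v : ℕ → ℤ) (N : ℕ)
    (hper : ∀ j, v (j + N) = v j) (h0 : psum v N = -1) :
    ∀ m, psum v (m + N) = psum v m - 1 := by
  intro m
  induction m with
  | zero => simpa [psum] using h0
  | succ m ih =>
    have h : m + 1 + N = (m + N) + 1 := by omega
    rw [h, psum_succ, ih, hper, psum_succ]; ring

private lemma psum_add (v : ℕ → ℤ) (l i : ℕ) :
    psum v (l + i) = psum v l + psum (fun j => v (l + j)) i := by
  induction i with
  | zero => simp [psum]
  | succ i ih => rw [← Nat.add_assoc, psum_succ, psum_succ, ih]; ring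

private lemma count_take_ofFn (K : ℕ) (f : Fin K → Bool) (v : ℕ → ℤ)
    (hv : ∀ j : Fin K, v j = if f j then 1 else -1) :
    ∀ i ≤ K, (((List.ofFn f).take i).count true : ℤ)
      - (((List.ofFn f).take i).count false : ℤ) = psum v i := by
  intro i hi
  induction i with
  | zero => simp [psum]
  | succ i ih =>
    have hiK : i < K := hi
    rw [List.take_succ, List.getElem?_ofFn]
    have h1 : (if h : i < K then some (f ⟨i, h⟩) else none) = some (f ⟨i, hiK⟩) :=
      dif_pos hiK
    rw [h1, psum_succ, ← ih (le_of_lt hiK), hv ⟨i, hiK⟩]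
    cases h : f ⟨i, hiK⟩ <;> simp [h, List.count_append] <;> omega

theorem stmt_15 (n : ℕ) (hn : 1 ≤ n)
    (x : Fin (2 * n - 1) → Bool)
    (hx : (Finset.univ.filter fun i => x i = true).card = n - 1) :
    ∃! ℓ : ℕ, ℓ ≤ 2 * n - 2 ∧
      IsDyck (List.ofFn fun i : Fin (2 * n - 2) =>
        x ⟨((i : ℕ) + ℓ) % (2 * n - 1), Nat.mod_lt _ (by omega)⟩) := by
  set v : ℕ → ℤ :=
    fun j => if x ⟨j % (2 * n - 1), Nat.mod_lt _ (by omega)⟩ then 1 else -1 with hvdef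
  -- periodicity of v
  have hper : ∀ j, v (j + (2 * n - 1)) = v j := by
    intro j
    simp only [hvdef, Nat.add_mod_right]
  -- one full period sums to -1
  have hsum : psum v (2 * n - 1) = -1 := by
    have h1 : psum v (2 * n - 1) = ∑ j : Fin (2 * n - 1), v j :=
      (Fin.sum_univ_eq_sum_range v (2 * n - 1)).symm
    have h2 : ∀ j : Fin (2 * n - 1), v (j : ℕ) = if x j then 1 else -1 := by
      intro j
      have hj : (⟨(j : ℕ) % (2 * n - 1), Nat.mod_lt _ (by omega)⟩ : Fin (2 * n - 1)) = j :=
        Fin.ext (Nat.mod_eq_of_lt j.isLt)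
      simp only [hvdef, hj]
    have h3 : ∀ j : Fin (2 * n - 1), (if x j then (1:ℤ) else -1)
        = 2 * (if x j = true then (1:ℤ) else 0) - 1 := by
      intro j; cases h : x j <;> simp [h]
    rw [h1, Finset.sum_congr rfl (fun j _ => h2 j),
      Finset.sum_congr rfl (fun j _ => h3 j), Finset.sum_sub_distrib,
      ← Finset.mul_sum, Finset.sum_boole, hx]
    simp only [Finset.sum_const, Finset.card_univ, Fintype.card_fin, nsmul_eq_mul, mul_one]
    omega
  have hperiod : ∀ m, psum v (m + (2 * n - 1)) = psum v m - 1 :=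
    psum_period v (2 * n - 1) hper hsum
  have hvpm : ∀ m, v m = 1 ∨ v m = -1 := by
    intro m; simp only [hvdef]; split <;> simp
  -- characterization of the Dyck condition
  have hdyck : ∀ ℓ : ℕ,
      (IsDyck (List.ofFn fun i : Fin (2 * n - 2) =>
        x ⟨((i : ℕ) + ℓ) % (2 * n - 1), Nat.mod_lt _ (by omega)⟩)
        ↔ ∀ i ≤ 2 * n - 2, psum v ℓ ≤ psum v (ℓ + i)) := by
    intro ℓ
    set f : Fin (2 * n - 2) → Bool := fun i =>
      x ⟨((i : ℕ) + ℓ) % (2 * n - 1), Nat.mod_lt _ (by omega)⟩ with hfdef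
    have hv' : ∀ j : Fin (2 * n - 2),
        (fun j => v (ℓ + j)) (j : ℕ) = if f j then 1 else -1 := by
      intro j
      simp only [hvdef, hfdef, Nat.add_comm ℓ (j : ℕ)]
    have hcnt : ∀ i ≤ 2 * n - 2, (((List.ofFn f).take i).count true : ℤ)
        - (((List.ofFn f).take i).count false : ℤ) = psum v (ℓ + i) - psum v ℓ := by
      intro i hi
      rw [count_take_ofFn (2 * n - 2) f (fun j => v (ℓ + j)) hv' i hi, psum_add v ℓ i]
      ring
    have htake : ∀ i, 2 * n - 2 ≤ i → (List.ofFn f).take i = List.ofFn f := by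
      intro i hi
      exact List.take_of_length_le (by rw [List.length_ofFn]; exact hi)
    constructor
    · intro hd i hi
      have h1 := hd.1 i
      have h2 := hcnt i hi
      omega
    · intro hp
      have hK0 : psum v (ℓ + (2 * n - 2)) = psum v ℓ := by
        have h1 : psum v (ℓ + (2 * n - 2) + 1) = psum v ℓ - 1 := by
          rw [show ℓ + (2 * n - 2) + 1 = ℓ + (2 * n - 1) by omega]; exact hperiod ℓ
        have h2 := psum_succ v (ℓ + (2 * n - 2))
        have h3 := hvpm (ℓ + (2 * n - 2))
        have h4 := hp (2 * n - 2) le_rfl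
        omega
      have hfull : ((List.ofFn f).count true : ℤ) - ((List.ofFn f).count false : ℤ) = 0 := by
        have h5 := hcnt (2 * n - 2) le_rfl
        rw [htake (2 * n - 2) le_rfl] at h5
        omega
      constructor
      · intro i
        by_cases hi : i ≤ 2 * n - 2
        · have h1 := hcnt i hi
          have h2 := hp i hi
          omega
        · rw [htake i (by omega)]
          omega
      · omega
  -- the minimum value μ of psum v over one period, and its first attainment point ℓ₀
  have hμex : ∃ μ : ℤ, (∀ m < 2 * n - 1, μ ≤ psum v m) ∧ ∃ m < 2 * n - 1, psum v m = μ := by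
    have hne : (Finset.range (2 * n - 1)).Nonempty := ⟨0, Finset.mem_range.mpr (by omega)⟩
    refine ⟨(Finset.range (2 * n - 1)).inf' hne (psum v),
      fun m hm => Finset.inf'_le _ (Finset.mem_range.mpr hm), ?_⟩
    obtain ⟨m₀, hm₀, hμ⟩ := Finset.exists_mem_eq_inf' hne (psum v)
    exact ⟨m₀, Finset.mem_range.mp hm₀, hμ.symm⟩
  obtain ⟨μ, hμle, hex⟩ := hμex
  have hfind : ∃ ℓ₀, (ℓ₀ < 2 * n - 1 ∧ psum v ℓ₀ = μ) ∧
      ∀ r < ℓ₀, ¬(r < 2 * n - 1 ∧ psum v r = μ) := by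
    have hex' : ∃ m, m < 2 * n - 1 ∧ psum v m = μ := by
      obtain ⟨m, hm, h⟩ := hex; exact ⟨m, hm, h⟩
    exact ⟨Nat.find hex', Nat.find_spec hex', fun r hr => Nat.find_min hex' hr⟩
  obtain ⟨ℓ₀, ⟨hℓ₀N, hℓ₀μ⟩, hℓ₀min⟩ := hfind
  have hbefore : ∀ r < ℓ₀, μ + 1 ≤ psum v r := by
    intro r hr
    have hrN : r < 2 * n - 1 := lt_trans hr hℓ₀N
    have h2 := hμle r hrN
    have h3 : psum v r ≠ μ := fun h => hℓ₀min r hr ⟨hrN, h⟩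
    omega
  have hPℓ₀ : ∀ i ≤ 2 * n - 2, psum v ℓ₀ ≤ psum v (ℓ₀ + i) := by
    intro i hi
    by_cases h : ℓ₀ + i < 2 * n - 1
    · rw [hℓ₀μ]; exact hμle _ h
    · have hr : ℓ₀ + i - (2 * n - 1) < ℓ₀ := by omega
      have h1 : psum v (ℓ₀ + i) = psum v (ℓ₀ + i - (2 * n - 1)) - 1 := by
        rw [← hperiod]; congr 1; omega
      have h2 := hbefore _ hr
      omega
  refine ⟨ℓ₀, ⟨by omega, (hdyck ℓ₀).mpr hPℓ₀⟩, ?_⟩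
  rintro ℓ' ⟨hℓ'K, hd⟩
  have hp' := (hdyck ℓ').mp hd
  have hℓ'N : ℓ' < 2 * n - 1 := by omega
  have hmin' : psum v ℓ' = μ := by
    have hle : ∀ m < 2 * n - 1, psum v ℓ' ≤ psum v m := by
      intro m hm
      by_cases h : ℓ' ≤ m
      · have h6 := hp' (m - ℓ') (by omega)
        rwa [show ℓ' + (m - ℓ') = m by omega] at h6
      · have h1 := hp' (m + (2 * n - 1) - ℓ') (by omega)
        rw [show ℓ' + (m + (2 * n - 1) - ℓ') = m + (2 * n - 1) by omega] at h1
        have h2 := hperiod m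
        omega
    obtain ⟨m₀, hm₀N, hm₀μ⟩ := hex
    have h1 := hle m₀ hm₀N
    have h2 := hμle ℓ' hℓ'N
    omega
  by_contra hne'
  rcases Nat.lt_or_ge ℓ' ℓ₀ with hlt | hge
  · exact hℓ₀min ℓ' hlt ⟨hℓ'N, hmin'⟩
  · have hlt : ℓ₀ < ℓ' := by omega
    have h2 := hp' (ℓ₀ + (2 * n - 1) - ℓ') (by omega)
    rw [show ℓ' + (ℓ₀ + (2 * n - 1) - ℓ') = ℓ₀ + (2 * n - 1) by omega] at h2
    have h3 := hperiod ℓ₀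
    omega
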